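/- arXiv:1312.2064 — 2 statements merged into one kernel-verified Lean document; each statement's English description precedes it below -/
import Mathlib

section
/- For every countable ordinal ξ, the lexicographic order ≤_lex on the space 2^ξ of functions from ξ to {0,1} admits no strictly increasing sequence of length ω₁; that is, there is no function f : ω₁ → 2^ξ such that α < β implies f(α) <_lex f(β). -/
universe u

theorem stmt_0_aux {ι : Type} [LinearOrder ι] [WellFoundedLT ι] [Countable ι]
    (ltLex : (ι → Bool) → (ι → Bool) → Prop)
    (hLex : ∀ x y, ltLex x y ↔ ∃ γ : ι, x γ < y γ ∧ ∀ δ, δ < γ → x δ = y δ) :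
    ¬ ∃ f : Set.Iio (Cardinal.aleph.{u} 1).ord → (ι → Bool),
        ∀ α β : Set.Iio (Cardinal.aleph.{u} 1).ord, α < β → ltLex (f α) (f β) := by
  classical
  rintro ⟨f, hf⟩
  have hlim : Order.IsSuccLimit (Cardinal.aleph.{u} 1).ord :=
    Cardinal.isSuccLimit_ord (Cardinal.aleph0_le_aleph 1)
  have hsucc : ∀ α : Set.Iio (Cardinal.aleph.{u} 1).ord,
      ∃ β : Set.Iio (Cardinal.aleph.{u} 1).ord, α < β := by
    rintro ⟨a, ha⟩
    exact ⟨⟨Order.succ a, hlim.succ_lt ha⟩, Order.lt_succ a⟩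
  have hmk : Cardinal.lift.{u} (Cardinal.mk ι) < (Cardinal.aleph.{u} 1).ord.cof := by
    rw [Cardinal.isRegular_aleph_one.cof_eq]
    calc Cardinal.lift.{u} (Cardinal.mk ι) ≤ Cardinal.aleph0 := by
          simpa using Cardinal.lift_le.{u}.mpr (Cardinal.mk_le_aleph0 (α := ι))
      _ < Cardinal.aleph 1 := Cardinal.aleph0_lt_aleph_one
  have hsup : ∀ g : ι → Set.Iio (Cardinal.aleph.{u} 1).ord,
      ∃ β : Set.Iio (Cardinal.aleph.{u} 1).ord, ∀ i, g i ≤ β := by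
    intro g
    exact ⟨⟨⨆ i, (g i).1, Ordinal.iSup_lt_ord_lift hmk fun i => (g i).2⟩,
      fun i => Ordinal.le_iSup (fun i => (g i).1) i⟩
  -- a coordinate is stable if eventually constant along ω₁
  let Stable : ι → Prop := fun γ =>
    ∃ α₀ : Set.Iio (Cardinal.aleph.{u} 1).ord, ∀ α, α₀ ≤ α → f α γ = f α₀ γ
  let w : ι → Set.Iio (Cardinal.aleph.{u} 1).ord :=
    fun γ => if h : Stable γ then h.choose else ⟨0, hlim.pos⟩
  have hw : ∀ γ, Stable γ → ∀ α, w γ ≤ α → f α γ = f (w γ) γ := by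
    intro γ hγ
    simp only [w, dif_pos hγ]
    exact hγ.choose_spec
  by_cases hall : ∀ γ, Stable γ
  · obtain ⟨β, hβ⟩ := hsup w
    obtain ⟨β', hβ'⟩ := hsucc β
    obtain ⟨γ, hγlt, -⟩ := (hLex _ _).mp (hf β β' hβ')
    have h1 : f β γ = f (w γ) γ := hw γ (hall γ) β (hβ γ)
    have h2 : f β' γ = f (w γ) γ := hw γ (hall γ) β' ((hβ γ).trans hβ'.le)
    rw [h1, h2] at hγlt
    exact lt_irrefl _ hγlt
  · push_neg at hall
    have hwfS : WellFounded ((· < ·) : ι → ι → Prop) := wellFounded_lt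
    have hS : {γ : ι | ¬ Stable γ}.Nonempty := hall
    set γs := hwfS.min _ hS with hγsdef
    have hγs : ¬ Stable γs := hwfS.min_mem _ hS
    have hmin : ∀ δ, δ < γs → Stable δ := by
      intro δ hδ
      by_contra h
      exact hwfS.not_lt_min _ h hδ
    obtain ⟨αs, hαs⟩ := hsup w
    have hagree : ∀ δ, δ < γs → ∀ α, αs ≤ α → f α δ = f (w δ) δ :=
      fun δ hδ α hα => hw δ (hmin δ hδ) α ((hαs δ).trans hα)
    apply hγs
    by_cases hone : ∃ α₁, αs ≤ α₁ ∧ f α₁ γs = true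
    · obtain ⟨α₁, hα₁, htrue⟩ := hone
      refine ⟨α₁, fun α hα => ?_⟩
      rcases eq_or_lt_of_le hα with rfl | hlt
      · rfl
      rw [htrue]
      by_contra hfalse
      have hfa : f α γs = false := by
        cases h : f α γs
        · rfl
        · exact absurd h hfalse
      obtain ⟨γ, hγlt, heq⟩ := (hLex _ _).mp (hf α₁ α hlt)
      rcases lt_trichotomy γ γs with h1 | rfl | h3
      · have h2 := (hagree γ h1 α₁ hα₁).trans (hagree γ h1 α (hα₁.trans hα)).symm
        rw [h2] at hγlt
        exact lt_irrefl _ hγlt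
      · rw [htrue, hfa] at hγlt
        exact absurd hγlt (by decide)
      · have h2 := heq γs h3
        rw [htrue, hfa] at h2
        exact Bool.noConfusion h2
    · push_neg at hone
      refine ⟨αs, fun α hα => ?_⟩
      have h1 : f α γs = false := by simpa using hone α hα
      have h2 : f αs γs = false := by simpa using hone αs le_rfl
      rw [h1, h2]

/-- For every countable ordinal (represented as a countable well-ordered type `ι`),
the lexicographic order on `ι → Bool` admits no strictly increasing ω₁-sequence. -/
theorem stmt_0 {ι : Type} [LinearOrder ι] [WellFoundedLT ι] [Countable ι]
    (ltLex : (ι → Bool) → (ι → Bool) → Prop)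
    (hLex : ∀ x y, ltLex x y ↔ ∃ γ : ι, x γ < y γ ∧ ∀ δ, δ < γ → x δ = y δ) :
    ¬ ∃ f : Set.Iio (Cardinal.aleph 1).ord → (ι → Bool),
        ∀ α β : Set.Iio (Cardinal.aleph 1).ord, α < β → ltLex (f α) (f β) :=
  stmt_0_aux ltLex hLex
end

section
/- For every countable ordinal ξ, every subset X of 2^ξ is countably cofinal with respect to the lexicographic order: there is a countable subset C ⊆ X such that every x ∈ X satisfies x ≤_lex c for some c ∈ C. -/
open Classical in
/-- Greedy lexicographic supremum of a set of functions `ι → Bool`. -/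
noncomputable def supFun {ι : Type} [LinearOrder ι] [WellFoundedLT ι]
    (X : Set (ι → Bool)) : ι → Bool :=
  fun γ => (IsWellFounded.wf : WellFounded ((· < ·) : ι → ι → Prop)).fix
    (C := fun _ => Bool)
    (fun γ ih => decide (∃ x ∈ X, (∀ δ, (h : δ < γ) → x δ = ih δ h) ∧ x γ = true)) γ

open Classical in
lemma supFun_spec {ι : Type} [LinearOrder ι] [WellFoundedLT ι]
    (X : Set (ι → Bool)) (γ : ι) :
    supFun X γ = true ↔ ∃ x ∈ X, (∀ δ < γ, x δ = supFun X δ) ∧ x γ = true := by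
  show (IsWellFounded.wf : WellFounded ((· < ·) : ι → ι → Prop)).fix
    (C := fun _ => Bool)
    (fun γ ih => decide (∃ x ∈ X, (∀ δ, (h : δ < γ) → x δ = ih δ h) ∧ x γ = true)) γ
      = true ↔ _
  rw [WellFounded.fix_eq, decide_eq_true_eq]
  rfl

/-- For every countable ordinal (a countable well-ordered type `ι`), every subset `X` of
`ι → Bool` is countably cofinal with respect to the lexicographic order. -/
theorem stmt_1 {ι : Type} [LinearOrder ι] [WellFoundedLT ι] [Countable ι]
    (leLex : (ι → Bool) → (ι → Bool) → Prop)
    (hLex : ∀ x y, leLex x y ↔ x = y ∨ ∃ γ : ι, x γ < y γ ∧ ∀ δ, δ < γ → x δ = y δ)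
    (X : Set (ι → Bool)) :
    ∃ C : Set (ι → Bool), C ⊆ X ∧ C.Countable ∧ ∀ x ∈ X, ∃ c ∈ C, leLex x c := by
  classical
  set s := supFun X with hs
  -- choice of witnesses agreeing with s up to and including γ
  let P : ι → Prop := fun γ => ∃ x ∈ X, ∀ δ ≤ γ, x δ = s δ
  let f : ι → (ι → Bool) := fun γ => if h : P γ then h.choose else s
  refine ⟨(Set.range f ∪ {s}) ∩ X, Set.inter_subset_right, ?_, ?_⟩
  · exact ((Set.countable_range f).union (Set.countable_singleton s)).mono
      Set.inter_subset_left
  · intro x hx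
    by_cases hxs : x = s
    · exact ⟨s, ⟨Or.inr rfl, hxs ▸ hx⟩, (hLex x s).2 (Or.inl hxs)⟩
    · -- least coordinate where x and s differ
      obtain ⟨d, hd⟩ := Function.ne_iff.1 hxs
      obtain ⟨γ, hγ, hmin⟩ := (IsWellFounded.wf : WellFounded ((· < ·) : ι → ι → Prop)).has_min
        {δ | x δ ≠ s δ} ⟨d, hd⟩
      have hagree : ∀ δ < γ, x δ = s δ := by
        intro δ hδ
        by_contra hne
        exact hmin δ hne hδ
      have hsγ : s γ = true := by
        rcases Bool.eq_false_or_eq_true (s γ) with h1 | h0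
        · exact h1
        · have hxγ : x γ = true := by
            rcases Bool.eq_false_or_eq_true (x γ) with h | h
            · exact h
            · exact absurd (h.trans h0.symm) hγ
          exact absurd ((supFun_spec X γ).2 ⟨x, hx, hagree, hxγ⟩) (by rw [← hs, h0]; simp)
      have hxγ : x γ = false := by
        rcases Bool.eq_false_or_eq_true (x γ) with h | h
        · exact absurd (h.trans hsγ.symm) hγ
        · exact h
      -- from s γ = true get a witness, hence P γ holds
      obtain ⟨c, hcX, hcagree, hcγ⟩ := (supFun_spec X γ).1 (hs ▸ hsγ)
      have hPγ : P γ := by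
        refine ⟨c, hcX, fun δ hδ => ?_⟩
        rcases lt_or_eq_of_le hδ with h | h
        · exact hs ▸ hcagree δ h
        · rw [h, hcγ, hsγ]
      have hf : f γ = hPγ.choose := dif_pos hPγ
      obtain ⟨hfX, hfagree⟩ := hPγ.choose_spec
      refine ⟨f γ, ⟨Or.inl ⟨γ, rfl⟩, hf ▸ hfX⟩, (hLex x (f γ)).2 (Or.inr ⟨γ, ?_, ?_⟩)⟩
      · rw [hf, hfagree γ le_rfl, hxγ, hsγ]; exact Bool.false_lt_true
      · intro δ hδ
        rw [hf, hfagree δ hδ.le, hagree δ hδ]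
end
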